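/- Let G : [0,1] → ℝ and τ* ∈ (0,1], and assume G is differentiable at τ* with derivative g(τ*). Let T be a map from functions [0,1] → ℝ to [0,1] with T(G) = τ*, Hadamard-differentiable at G tangentially to continuous functions with derivative Ṫ: for every continuous H : [0,1] → ℝ and every family (H_t)_{t>0} of cadlag functions with ‖H_t − H‖_∞ → 0 as t → 0⁺, one has (T(G + t·H_t) − T(G))/t → Ṫ(H). Define R(F) = F(T(F)). Then for every such continuous H and every such family (H_t), (R(G + t·H_t) − R(G))/t → H(τ*) + g(τ*)·Ṫ(H) as t → 0⁺. -/

import Mathlib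

open Filter Set

/-- A cadlag function on `[0,1]`: right-continuous on `[0,1)` and with left limits
at every point of `(0,1]`. -/
def Cadlag (f : ℝ → ℝ) : Prop :=
  (∀ x ∈ Set.Ico (0:ℝ) 1, ContinuousWithinAt f (Set.Ici x) x) ∧
  (∀ x ∈ Set.Ioc (0:ℝ) 1, ∃ l, Filter.Tendsto f (nhdsWithin x (Set.Iio x)) (nhds l))

/-- Convergence in sup norm on `[0,1]` as `t → 0⁺`. -/
def SupConv (Ht : ℝ → ℝ → ℝ) (H : ℝ → ℝ) : Prop :=
  ∀ ε > (0:ℝ), ∀ᶠ t in nhdsWithin (0:ℝ) (Set.Ioi 0),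
    ∀ x ∈ Set.Icc (0:ℝ) 1, |Ht t x - H x| ≤ ε

/-- Hadamard differentiability of the proportion-of-rejections map
`R(F) = F(T(F))` at `G`, with derivative `H ↦ H(τ*) + g(τ*)·Ṫ(H)`. -/
theorem stmt_8 (G : ℝ → ℝ) (τs g : ℝ) (T : (ℝ → ℝ) → ℝ) (Tdot : (ℝ → ℝ) → ℝ)
    (hτs : τs ∈ Set.Ioc (0:ℝ) 1)
    (hTG : T G = τs)
    (hg : HasDerivWithinAt G g (Set.Icc 0 1) τs)
    (hTrange : ∀ F : ℝ → ℝ, T F ∈ Set.Icc (0:ℝ) 1)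
    (hHad : ∀ H : ℝ → ℝ, ContinuousOn H (Set.Icc 0 1) →
      ∀ Ht : ℝ → ℝ → ℝ, (∀ t ∈ Set.Ioi (0:ℝ), Cadlag (Ht t)) → SupConv Ht H →
      Filter.Tendsto (fun t => (T (fun x => G x + t * Ht t x) - T G) / t)
        (nhdsWithin (0:ℝ) (Set.Ioi 0)) (nhds (Tdot H))) :
    ∀ H : ℝ → ℝ, ContinuousOn H (Set.Icc 0 1) →
      ∀ Ht : ℝ → ℝ → ℝ, (∀ t ∈ Set.Ioi (0:ℝ), Cadlag (Ht t)) → SupConv Ht H →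
      Filter.Tendsto
        (fun t => ((fun x => G x + t * Ht t x) (T (fun x => G x + t * Ht t x))
            - G (T G)) / t)
        (nhdsWithin (0:ℝ) (Set.Ioi 0)) (nhds (H τs + g * Tdot H)) := by
  intro H hH Ht hcad hsup
  set l := nhdsWithin (0:ℝ) (Set.Ioi 0) with hl
  have hT := hHad H hH Ht hcad hsup
  rw [hTG] at hT
  set τ : ℝ → ℝ := fun t => T (fun x => G x + t * Ht t x) with hτdef
  have ht_pos : ∀ᶠ t in l, (0:ℝ) < t := by
    rw [hl]; exact eventually_mem_nhdsWithin
  -- τ t → τs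
  have hτ_tendsto : Tendsto τ l (nhds τs) := by
    have h0 : Tendsto (fun t : ℝ => t) l (nhds 0) :=
      tendsto_id.mono_left nhdsWithin_le_nhds
    have hmul : Tendsto (fun t => t * ((τ t - τs) / t) + τs) l (nhds (0 * Tdot H + τs)) :=
      (h0.mul hT).add tendsto_const_nhds
    rw [zero_mul, zero_add] at hmul
    refine hmul.congr' ?_
    filter_upwards [ht_pos] with t ht
    field_simp
    ring
  have hτ_mem : ∀ t, τ t ∈ Set.Icc (0:ℝ) 1 := fun t => hTrange _
  have hτ_tendstoW : Tendsto τ l (nhdsWithin τs (Set.Icc 0 1)) :=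
    tendsto_nhdsWithin_of_tendsto_nhds_of_eventually_within _ hτ_tendsto
      (Filter.Eventually.of_forall hτ_mem)
  -- F t → g where F t = if τ t = τs then g else slope G τs (τ t)
  have hslope : Tendsto (slope G τs) (nhdsWithin τs (Set.Icc 0 1 \ {τs})) (nhds g) :=
    hasDerivWithinAt_iff_tendsto_slope.mp hg
  set F : ℝ → ℝ := fun t => if τ t = τs then g else slope G τs (τ t) with hFdef
  have hF : Tendsto F l (nhds g) := by
    rw [Metric.tendsto_nhds] at hslope ⊢
    intro ε hε
    have hs := hslope ε hε
    rw [eventually_nhdsWithin_iff] at hs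
    filter_upwards [hτ_tendsto hs] with t ht
    by_cases h : τ t = τs
    · simp [hFdef, h, hε]
    · simpa [hFdef, h] using ht ⟨hτ_mem t, h⟩
  -- Ht t (τ t) → H τs
  have hH2 : Tendsto (fun t => H (τ t)) l (nhds (H τs)) :=
    ((hH τs ⟨le_of_lt hτs.1, hτs.2⟩).tendsto).comp hτ_tendstoW
  have hHt : Tendsto (fun t => Ht t (τ t)) l (nhds (H τs)) := by
    rw [Metric.tendsto_nhds]
    intro ε hε
    have h1 := hsup (ε/2) (by linarith)
    rw [Metric.tendsto_nhds] at hH2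
    filter_upwards [h1, hH2 (ε/2) (by linarith)] with t h1t h2t
    have := h1t (τ t) (hτ_mem t)
    rw [Real.dist_eq] at h2t ⊢
    calc |Ht t (τ t) - H τs| ≤ |Ht t (τ t) - H (τ t)| + |H (τ t) - H τs| := by
          have := abs_sub_le (Ht t (τ t)) (H (τ t)) (H τs); linarith
      _ < ε := by linarith
  -- combine
  have hmain : Tendsto (fun t => F t * ((τ t - τs) / t) + Ht t (τ t)) l
      (nhds (g * Tdot H + H τs)) := (hF.mul hT).add hHt
  rw [hTG, add_comm (H τs)]
  refine hmain.congr' ?_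
  filter_upwards [ht_pos] with t ht
  have htne : t ≠ 0 := ne_of_gt ht
  show _ = (G (τ t) + t * Ht t (τ t) - G τs) / t
  by_cases h : τ t = τs
  · simp only [hFdef, h, if_pos rfl, sub_self, zero_div, mul_zero, zero_add]
    field_simp
    ring
  · simp only [hFdef, if_neg h]
    rw [slope_def_field]
    have hne : τ t - τs ≠ 0 := sub_ne_zero.mpr h
    field_simp
    ring
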